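/- For each fixed d ≥ 1, the sequence of Eulerian numbers A_{d,k}, k = 1, ..., d, is log-concave: A_{d,k}^2 ≥ A_{d,k-1}·A_{d,k+1} for 2 ≤ k ≤ d-1. -/

import Mathlib

/-- The number of descents of a permutation `σ` of `{0, …, d-1}`:
indices `i` with `i + 1 < d` and `σ i > σ (i+1)`. -/
def descents {d : ℕ} (σ : Equiv.Perm (Fin d)) : ℕ :=
  (Finset.univ.filter fun i : Fin d =>
    if h : i.val + 1 < d then σ ⟨i.val + 1, h⟩ < σ i else False).card

/-- The Eulerian number `A_{d,k}`: permutations of `d` elements with exactly `k-1` descents. -/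
def eulerian (d k : ℕ) : ℕ :=
  (Finset.univ.filter fun σ : Equiv.Perm (Fin d) => descents σ = k - 1).card

namespace ELC

def desc : List ℕ → ℕ
  | a :: b :: t => (if b < a then 1 else 0) + desc (b :: t)
  | _ => 0

@[simp] lemma desc_nil : desc [] = 0 := rfl
@[simp] lemma desc_singleton (a : ℕ) : desc [a] = 0 := rfl
@[simp] lemma desc_cons_cons (a b : ℕ) (t : List ℕ) :
    desc (a::b::t) = (if b < a then 1 else 0) + desc (b::t) := rfl

lemma desc_le : ∀ l : List ℕ, desc l ≤ l.length - 1
  | [] => le_refl _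
  | [_] => le_refl _
  | a :: b :: t => by
    have := desc_le (b :: t)
    have h2 : (if b < a then 1 else 0) ≤ 1 := by split <;> simp
    simp only [desc_cons_cons, List.length_cons] at *
    omega

lemma desc_eq_sum (l : List ℕ) :
    desc l = ∑ i ∈ Finset.range (l.length - 1),
      (if l.getD (i+1) 0 < l.getD i 0 then 1 else 0) := by
  match l with
  | [] => simp
  | [a] => simp
  | a :: b :: t =>
    rw [desc_cons_cons, desc_eq_sum (b :: t)]
    simp only [List.length_cons, Nat.add_sub_cancel]
    rw [Finset.sum_range_succ']
    simp only [List.getD_cons_succ, List.getD_cons_zero]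
    omega

def word {d : ℕ} (σ : Equiv.Perm (Fin d)) : List ℕ := List.ofFn (fun i => (σ i : ℕ))

@[simp] lemma word_length {d : ℕ} (σ : Equiv.Perm (Fin d)) : (word σ).length = d := by
  simp [word]

lemma word_getD {d : ℕ} (σ : Equiv.Perm (Fin d)) {i : ℕ} (h : i < d) :
    (word σ).getD i 0 = σ ⟨i, h⟩ := by
  have hl : i < (word σ).length := by simp [h]
  rw [List.getD_eq_getElem _ _ hl]
  simp [word]

lemma descents_eq_desc_word {d : ℕ} (σ : Equiv.Perm (Fin d)) :
    descents σ = desc (word σ) := by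
  have L : descents σ = ∑ i ∈ Finset.range d,
      (if h : i + 1 < d then
        (if (word σ).getD (i+1) 0 < (word σ).getD i 0 then 1 else 0) else 0) := by
    rw [descents, Finset.card_filter,
      ← Fin.sum_univ_eq_sum_range (fun i =>
        if h : i + 1 < d then
          (if (word σ).getD (i+1) 0 < (word σ).getD i 0 then 1 else 0) else 0) d]
    refine Finset.sum_congr rfl fun i _ => ?_
    by_cases h : (i : ℕ) + 1 < d
    · simp only [dif_pos h, if_pos h]
      rw [word_getD σ h, word_getD σ (by omega : (i:ℕ) < d)]
      have : (⟨(i:ℕ), by omega⟩ : Fin d) = i := by ext; rfl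
      rw [this]
      rfl
    · simp [h]
  rw [L, desc_eq_sum, word_length]
  match d with
  | 0 => simp
  | n + 1 =>
    simp only [Nat.add_sub_cancel]
    rw [Finset.sum_range_succ, dif_neg (lt_irrefl (n+1)), add_zero]
    refine Finset.sum_congr rfl fun i hi => ?_
    rw [dif_pos (by simpa using Nat.succ_lt_succ (Finset.mem_range.mp hi))]


/-- positions where inserting a new maximum does not change the descent count -/
def keep (l : List ℕ) (p : ℕ) : Prop :=
  p = l.length ∨ (0 < p ∧ l.getD p 0 < l.getD (p-1) 0)

instance (l : List ℕ) (p : ℕ) : Decidable (keep l p) := by unfold keep; infer_instance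

lemma desc_insertIdx (m : ℕ) :
    ∀ (l : List ℕ) (p : ℕ), p ≤ l.length → (∀ x ∈ l, x < m) →
    desc (l.insertIdx p m) = desc l + (if keep l p then 0 else 1) := by
  intro l
  induction l with
  | nil =>
    intro p hp _
    have : p = 0 := by simpa using hp
    subst this
    simp [keep]
  | cons a t ih =>
    intro p hp hm
    match p with
    | 0 =>
      simp only [List.insertIdx_zero]
      have ham : a < m := hm a (by simp)
      match t with
      | [] => simp [keep, ham]
      | b :: s =>
        have : ¬ keep (a :: b :: s) 0 := by simp [keep]
        rw [if_neg this]
        simp only [desc_cons_cons, if_pos ham]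
        omega
    | q + 1 =>
      rw [List.insertIdx_succ_cons]
      have hq : q ≤ t.length := by simpa using hp
      match t with
      | [] =>
        have hq0 : q = 0 := by simpa using hq
        subst hq0
        have ham : a < m := hm a (by simp)
        simp [keep, if_neg (not_lt.mpr (le_of_lt ham))]
      | b :: s =>
        have hm' : ∀ x ∈ b :: s, x < m := fun x hx => hm x (by simp [hx])
        have ihr := ih q hq hm'
        match q with
        | 0 =>
          simp only [List.insertIdx_zero] at ihr ⊢
          have hbm : b < m := hm' b (by simp)
          have hma : ¬ m < a := not_lt.mpr (le_of_lt (hm a (by simp)))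
          have hk1 : keep (a :: b :: s) (0+1) ↔ b < a := by
            simp only [keep, List.length_cons, List.getD_cons_succ, List.getD_cons_zero,
              Nat.add_sub_cancel]
            omega
          simp only [desc_cons_cons]
          rw [if_neg hma, if_pos hbm]
          by_cases hba : b < a
          · rw [if_pos ((hk1.mpr hba)), if_pos hba]; omega
          · rw [if_neg (fun h => hba (hk1.mp h)), if_neg hba]; omega
        | q' + 1 =>
          rw [List.insertIdx_succ_cons] at ihr ⊢
          rw [desc_cons_cons, desc_cons_cons, ihr]
          have hkeq : keep (a :: b :: s) (q' + 2) ↔ keep (b :: s) (q' + 1) := by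
            simp only [keep, List.length_cons, List.getD_cons_succ]
            constructor
            · rintro (h | ⟨_, h⟩)
              · left; omega
              · right; exact ⟨by omega, by simpa using h⟩
            · rintro (h | ⟨_, h⟩)
              · left; omega
              · right; exact ⟨by omega, by simpa using h⟩
          by_cases hk : keep (b :: s) (q' + 1)
          · rw [if_pos hk, if_pos (hkeq.mpr hk)]; omega
          · rw [if_neg hk, if_neg (fun h => hk (hkeq.mp h))]; omega

/-- number of keep positions is desc l + 1 -/
lemma card_keep (l : List ℕ) :
    ((Finset.range (l.length + 1)).filter (keep l)).card = desc l + 1 := by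
  have hkl : keep l l.length := Or.inl rfl
  rw [Finset.range_add_one, Finset.filter_insert, if_pos hkl,
    Finset.card_insert_of_notMem (by simp)]
  congr 1
  have he : (Finset.range l.length).filter (keep l)
      = (Finset.range l.length).filter (fun p => 0 < p ∧ l.getD p 0 < l.getD (p-1) 0) := by
    refine Finset.filter_congr fun p hp => ?_
    simp only [Finset.mem_range] at hp
    unfold keep
    constructor
    · rintro (h|h)
      · omega
      · exact h
    · exact Or.inr
  rw [he, Finset.card_filter]
  match l with
  | [] => simp
  | a :: t =>
    rw [desc_eq_sum (a :: t)]
    simp only [List.length_cons, Nat.add_sub_cancel]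
    rw [Finset.sum_range_succ']
    simp only [Nat.succ_sub_one, Nat.zero_lt_succ, true_and, lt_irrefl, false_and, if_false,
      add_zero]



lemma erase_insertIdx (m : ℕ) :
    ∀ (l : List ℕ) (p : ℕ), p ≤ l.length → m ∉ l →
      (l.insertIdx p m).erase m = l := by
  intro l
  induction l with
  | nil =>
    intro p hp _
    have : p = 0 := by simpa using hp
    subst this
    simp
  | cons a t ih =>
    intro p hp hm
    match p with
    | 0 => simp
    | q + 1 =>
      rw [List.insertIdx_succ_cons, List.erase_cons_tail (by
        simp only [beq_iff_eq]
        exact fun h => hm (by simp [h]))]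
      rw [ih q (by simpa using hp) (fun h => hm (by simp [h]))]

lemma idxOf_insertIdx (m : ℕ) :
    ∀ (l : List ℕ) (p : ℕ), p ≤ l.length → m ∉ l →
      (l.insertIdx p m).idxOf m = p := by
  intro l
  induction l with
  | nil =>
    intro p hp _
    have : p = 0 := by simpa using hp
    subst this
    simp
  | cons a t ih =>
    intro p hp hm
    match p with
    | 0 => simp
    | q + 1 =>
      rw [List.insertIdx_succ_cons, List.idxOf_cons_ne _ (by
        exact fun h => hm (by simp [← h]))]
      rw [ih q (by simpa using hp) (fun h => hm (by simp [h]))]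

lemma insertIdx_idxOf_erase (m : ℕ) :
    ∀ (l : List ℕ), m ∈ l → (l.erase m).insertIdx (l.idxOf m) m = l := by
  intro l
  induction l with
  | nil => intro h; simp at h
  | cons a t ih =>
    intro hm
    by_cases ha : a = m
    · subst ha
      simp
    · have hmt : m ∈ t := by
        rcases List.mem_cons.mp hm with h|h
        · exact absurd h.symm ha
        · exact h
      rw [List.erase_cons_tail (by simp [ha]), List.idxOf_cons_ne _ (fun h => ha h),
        List.insertIdx_succ_cons, ih hmt]

lemma idxOf_le_length_erase (m : ℕ) (l : List ℕ) (h : m ∈ l) (hnd : l.Nodup) :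
    l.idxOf m ≤ (l.erase m).length := by
  rw [List.length_erase_of_mem h]
  have := List.idxOf_lt_length_iff.mpr h
  omega


def W (d : ℕ) : Finset (List ℕ) := Finset.univ.image (fun σ : Equiv.Perm (Fin d) => word σ)

lemma word_injective {d : ℕ} : Function.Injective (word (d := d)) := by
  intro σ τ h
  have h2 : (fun i => ((σ i : ℕ))) = fun i => ((τ i : ℕ)) := List.ofFn_injective h
  ext i
  exact congrFun h2 i

lemma word_perm_range {d : ℕ} (σ : Equiv.Perm (Fin d)) : (word σ).Perm (List.range d) := by
  apply List.perm_of_nodup_nodup_toFinset_eq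
  · exact (List.nodup_ofFn).mpr (fun i j h => σ.injective (Fin.val_injective h))
  · exact List.nodup_range
  · ext x
    simp only [List.mem_toFinset, word, List.mem_ofFn, Set.mem_range, List.mem_range]
    constructor
    · rintro ⟨i, rfl⟩; exact (σ i).isLt
    · intro hx; exact ⟨σ.symm ⟨x, hx⟩, by simp⟩

lemma mem_W_iff {d : ℕ} {l : List ℕ} : l ∈ W d ↔ l.Perm (List.range d) := by
  constructor
  · rintro hl
    obtain ⟨σ, _, rfl⟩ := Finset.mem_image.mp hl
    exact word_perm_range σ
  · intro h
    have hlen : l.length = d := by simpa using h.length_eq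
    have hnd : l.Nodup := h.nodup_iff.mpr List.nodup_range
    have hmem : ∀ x ∈ l, x < d := fun x hx => by simpa using h.subset hx
    let f : Fin d → Fin d := fun i =>
      ⟨l[(i : ℕ)]'(by rw [hlen]; exact i.isLt), hmem _ (List.getElem_mem _)⟩
    have hinj : Function.Injective f := by
      intro i j hij
      have hg : l[(i : ℕ)]'(by rw [hlen]; exact i.isLt) = l[(j : ℕ)]'(by rw [hlen]; exact j.isLt) :=
        congrArg Fin.val hij
      exact Fin.ext ((hnd.getElem_inj_iff).mp hg)
    let σ := Equiv.ofBijective f (Finite.injective_iff_bijective.mp hinj)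
    refine Finset.mem_image.mpr ⟨σ, Finset.mem_univ _, ?_⟩
    apply List.ext_getElem (by simp [word, hlen])
    intro i h1 h2
    simp only [word, List.getElem_ofFn]
    show (f _ : ℕ) = l[i]
    rfl

lemma range_perm_erase (d : ℕ) : ((List.range (d+1)).erase d).Perm (List.range d) := by
  rw [List.range_succ, List.erase_append_right _ (by simp), List.erase_cons_head, List.append_nil]

lemma insert_desc' (d : ℕ) (l' : List ℕ) (hl' : l'.Perm (List.range d)) (p : ℕ) (hp : p ≤ d) :
    desc (l'.insertIdx p d) = desc l' + (if keep l' p then 0 else 1) := by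
  have hlen : l'.length = d := by simpa using hl'.length_eq
  exact desc_insertIdx d l' p (by omega) (fun x hx => by simpa using hl'.subset hx)

lemma fiber_card (d j : ℕ) (l' : List ℕ) (hl' : l'.Perm (List.range d)) :
    (((W (d+1)).filter fun l => desc l = j).filter fun l => l.erase d = l').card
      = ((Finset.range (d+1)).filter fun p => desc (l'.insertIdx p d) = j).card := by
  have hlen : l'.length = d := by simpa using hl'.length_eq
  have hd : (d : ℕ) ∉ l' := fun h => by simpa using hl'.subset h
  rw [← Finset.card_image_of_injOn (f := fun p => l'.insertIdx p d)
    (s := (Finset.range (d+1)).filter fun p => desc (l'.insertIdx p d) = j) ?inj]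
  case inj =>
    intro p1 h1 p2 h2 he
    have hp1 : p1 ≤ l'.length := by
      rw [hlen]; simpa using Nat.lt_succ_iff.mp (Finset.mem_range.mp (Finset.mem_filter.mp h1).1)
    have hp2 : p2 ≤ l'.length := by
      rw [hlen]; simpa using Nat.lt_succ_iff.mp (Finset.mem_range.mp (Finset.mem_filter.mp h2).1)
    have he' : l'.insertIdx p1 d = l'.insertIdx p2 d := he
    rw [← idxOf_insertIdx d l' p1 hp1 hd, ← idxOf_insertIdx d l' p2 hp2 hd, he']
  congr 1
  ext l
  simp only [Finset.mem_image, Finset.mem_filter, Finset.mem_range]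
  constructor
  · rintro ⟨⟨hW, hdesc⟩, herase⟩
    have hlperm := mem_W_iff.mp hW
    have hdl : (d:ℕ) ∈ l := hlperm.mem_iff.mpr (by simp)
    have hins : l'.insertIdx (l.idxOf d) d = l := by
      rw [← herase]; exact insertIdx_idxOf_erase d l hdl
    have hlt : l.idxOf d < d + 1 := by
      have h1 := List.idxOf_lt_length_iff.mpr hdl
      have h2 : l.length = d+1 := by simpa using hlperm.length_eq
      omega
    exact ⟨l.idxOf d, ⟨⟨hlt, by rw [hins]; exact hdesc⟩, hins⟩⟩
  · rintro ⟨p, ⟨⟨hp, hdesc⟩, rfl⟩⟩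
    have hp' : p ≤ l'.length := by rw [hlen]; omega
    refine ⟨⟨?_, hdesc⟩, erase_insertIdx d l' p hp' hd⟩
    refine mem_W_iff.mpr ((List.perm_insertIdx d l' hp').trans
      ((hl'.cons d).trans ?_))
    exact ((List.perm_append_singleton d (List.range d)).symm).trans (List.range_succ (n := d) ▸ List.Perm.refl _)

lemma pos_count (d j : ℕ) (l' : List ℕ) (hl' : l'.Perm (List.range d)) :
    ((Finset.range (d+1)).filter fun p => desc (l'.insertIdx p d) = j).card
      = if desc l' = j then j + 1
        else if desc l' + 1 = j then d - desc l' else 0 := by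
  have hlen : l'.length = d := by simpa using hl'.length_eq
  have hck := card_keep l'
  rw [hlen] at hck
  by_cases h1 : desc l' = j
  · rw [if_pos h1]
    have he : (Finset.range (d+1)).filter (fun p => desc (l'.insertIdx p d) = j)
        = (Finset.range (d+1)).filter (keep l') := by
      refine Finset.filter_congr fun p hp => ?_
      rw [insert_desc' d l' hl' p (Nat.lt_succ_iff.mp (Finset.mem_range.mp hp))]
      by_cases hk : keep l' p <;> simp [hk, h1]
    rw [he]
    omega
  · rw [if_neg h1]
    by_cases h2 : desc l' + 1 = j
    · rw [if_pos h2]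
      have he : (Finset.range (d+1)).filter (fun p => desc (l'.insertIdx p d) = j)
          = (Finset.range (d+1)).filter (fun p => ¬ keep l' p) := by
        refine Finset.filter_congr fun p hp => ?_
        rw [insert_desc' d l' hl' p (Nat.lt_succ_iff.mp (Finset.mem_range.mp hp))]
        by_cases hk : keep l' p <;> simp [hk, h1, h2]
      rw [he, Finset.filter_not, Finset.card_sdiff_of_subset (Finset.filter_subset _ _), hck,
        Finset.card_range]
      omega
    · rw [if_neg h2]
      rw [Finset.card_eq_zero]
      refine Finset.filter_false_of_mem fun p hp => ?_
      rw [insert_desc' d l' hl' p (Nat.lt_succ_iff.mp (Finset.mem_range.mp hp))]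
      by_cases hk : keep l' p <;> simp [hk] <;> omega

def S (d j : ℕ) : ℕ :=
  (Finset.univ.filter fun σ : Equiv.Perm (Fin d) => descents σ = j).card

lemma S_eq_T (d j : ℕ) : S d j = ((W d).filter fun l => desc l = j).card := by
  rw [S, W, Finset.filter_image,
    Finset.card_image_of_injective _ word_injective]
  congr 1
  exact Finset.filter_congr fun σ _ => by rw [descents_eq_desc_word]

lemma erase_maps (d j : ℕ) :
    ∀ l ∈ (W (d+1)).filter fun l => desc l = j, l.erase d ∈ W d := by
  intro l hl
  have hlperm := mem_W_iff.mp (Finset.mem_filter.mp hl).1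
  exact mem_W_iff.mpr ((hlperm.erase d).trans (range_perm_erase d))

lemma S_rec (d j : ℕ) (hj : 1 ≤ j) :
    S (d+1) j = (j+1) * S d j + (d - (j-1)) * S d (j-1) := by
  rw [S_eq_T, S_eq_T, S_eq_T,
    Finset.card_eq_sum_card_fiberwise (erase_maps d j)]
  have hrw : ∀ l' ∈ W d,
      (((W (d+1)).filter fun l => desc l = j).filter fun l => l.erase d = l').card
        = (if desc l' = j then j+1 else 0) + (if desc l' = j-1 then d - (j-1) else 0) := by
    intro l' hl'
    rw [fiber_card d j l' (mem_W_iff.mp hl'), pos_count d j l' (mem_W_iff.mp hl')]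
    by_cases h1 : desc l' = j
    · rw [if_pos h1, if_pos h1, if_neg (by omega)]
    · rw [if_neg h1, if_neg h1]
      by_cases h2 : desc l' + 1 = j
      · rw [if_pos h2, if_pos (by omega)]
        omega
      · rw [if_neg h2, if_neg (by omega)]
  rw [Finset.sum_congr rfl hrw, Finset.sum_add_distrib,
    ← Finset.sum_filter (fun l' => desc l' = j) (fun _ => j+1),
    ← Finset.sum_filter (fun l' => desc l' = j-1) (fun _ => d - (j-1)),
    Finset.sum_const, Finset.sum_const, smul_eq_mul, smul_eq_mul,
    mul_comm _ (j+1), mul_comm _ (d - (j-1))]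

lemma S_rec0 (d : ℕ) : S (d+1) 0 = S d 0 := by
  rw [S_eq_T, S_eq_T, Finset.card_eq_sum_card_fiberwise (erase_maps d 0)]
  have hrw : ∀ l' ∈ W d,
      (((W (d+1)).filter fun l => desc l = 0).filter fun l => l.erase d = l').card
        = (if desc l' = 0 then 1 else 0) := by
    intro l' hl'
    rw [fiber_card d 0 l' (mem_W_iff.mp hl'), pos_count d 0 l' (mem_W_iff.mp hl')]
    by_cases h1 : desc l' = 0
    · rw [if_pos h1, if_pos h1]
    · rw [if_neg h1, if_neg h1, if_neg (by omega)]
  rw [Finset.sum_congr rfl hrw,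
    ← Finset.sum_filter (fun l' => desc l' = 0) (fun _ => 1),
    Finset.sum_const, smul_eq_mul, mul_one]

lemma S_zero_of_ge (d j : ℕ) (hj1 : 1 ≤ j) (hj : d ≤ j) : S d j = 0 := by
  rw [S, Finset.card_eq_zero]
  refine Finset.filter_false_of_mem fun σ _ => ?_
  have h1 := desc_le (word σ)
  rw [← descents_eq_desc_word, word_length] at h1
  omega

lemma S_pos (d : ℕ) : ∀ j, j + 1 ≤ d → 1 ≤ S d j := by
  induction d with
  | zero => intro j h; omega
  | succ d ih =>
    intro j hj
    match j with
    | 0 =>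
      match d with
      | 0 => decide
      | d+1 =>
        rw [S_rec0]
        exact ih 0 (by omega)
    | t + 1 =>
      rw [S_rec d (t+1) (by omega)]
      have h1 : 1 ≤ S d t := ih t (by omega)
      have h2 : 1 ≤ d - t := by omega
      simp only [Nat.add_sub_cancel]
      calc 1 ≤ (d - t) * S d t := Nat.one_le_iff_ne_zero.mpr (by positivity)
      _ ≤ _ := Nat.le_add_left _ _

lemma two_mul_le_sq_add_sq (a b : ℕ) : 2 * (a * b) ≤ a^2 + b^2 := by
  rcases le_total a b with h | h <;>
  · obtain ⟨t, rfl⟩ := Nat.exists_eq_add_of_le h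
    ring_nf
    nlinarith [sq_nonneg t]

lemma S_LC (d : ℕ) : ∀ i, S d i * S d (i+2) ≤ S d (i+1)^2 := by
  induction d with
  | zero =>
    intro i
    have h0 : S 0 (i+2) = 0 := S_zero_of_ge 0 (i+2) (by omega) (by omega)
    rw [h0, mul_zero]
    exact Nat.zero_le _
  | succ d ih =>
    intro i
    match i with
    | 0 =>
      rw [S_rec0, S_rec d 1 (by omega), S_rec d 2 (by omega)]
      simp only [show (1:ℕ)-1 = 0 from rfl, show (2:ℕ)-1 = 1 from rfl, Nat.sub_zero]
      norm_num
      have h := ih 0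
      obtain ⟨c, hc', hc⟩ : ∃ c, d - 1 = c ∧ c ≤ d := ⟨d - 1, rfl, Nat.sub_le _ _⟩
      rw [hc']
      set A := S d 0
      set B := S d 1
      set C := S d 2
      have e1 : 3 * (A * C) ≤ 3 * B^2 := Nat.mul_le_mul_left _ h
      have e2 : c * (A * B) ≤ d * (A * B) := Nat.mul_le_mul_right _ hc
      nlinarith [e1, e2, Nat.zero_le (d*(A*B)), Nat.zero_le (d*d*(A*A))]
    | e + 1 =>
      by_cases hd : e + 3 ≤ d
      · have hy : e + 2 ≤ d := by omega
        rw [S_rec d (e+1) (by omega), S_rec d (e+2) (by omega), S_rec d (e+3) (by omega)]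
        simp only [show e+1-1 = e from rfl, show e+2-1 = e+1 from rfl,
          show e+3-1 = e+2 from rfl]
        obtain ⟨y, hy'⟩ : ∃ y, d - e = y + 2 := ⟨d - e - 2, by omega⟩
        have r2 : d - (e+1) = y + 1 := by omega
        have r3 : d - (e+2) = y := by omega
        rw [hy', r2, r3]
        set A := S d e
        set B := S d (e+1)
        set C := S d (e+2)
        set D := S d (e+3)
        have h1 : B * D ≤ C^2 := ih (e+1)
        have h2 : A * C ≤ B^2 := ih e
        have hB : 1 ≤ B := S_pos d (e+1) (by omega)
        have hC : 1 ≤ C := S_pos d (e+2) (by omega)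
        have h3 : A * D ≤ B * C := by
          have hmul : (A * D) * (B * C) ≤ (B * C) * (B * C) := by
            calc (A * D) * (B * C) = (A * C) * (B * D) := by ring
            _ ≤ B^2 * C^2 := Nat.mul_le_mul h2 h1
            _ = (B * C) * (B * C) := by ring
          exact Nat.le_of_mul_le_mul_right hmul (by positivity)
        have e1 : (e+2)*(e+4) * (B*D) ≤ (e+2)*(e+4) * C^2 := Nat.mul_le_mul_left _ h1
        have e2 : y*(y+2) * (A*C) ≤ y*(y+2) * B^2 := Nat.mul_le_mul_left _ h2
        have e3 : (e+4)*(y+2) * (A*D) ≤ (e+4)*(y+2) * (B*C) := Nat.mul_le_mul_left _ h3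
        have e4 : 2 * (B*C) ≤ B^2 + C^2 := two_mul_le_sq_add_sq B C
        nlinarith [e1, e2, e3, e4]
      · have h0 : S (d+1) (e+1+2) = 0 := S_zero_of_ge (d+1) (e+3) (by omega) (by omega)
        rw [h0, mul_zero]
        exact Nat.zero_le _

end ELC


lemma eulerian_eq_S (d k : ℕ) : eulerian d k = ELC.S d (k-1) := rfl

theorem eulerian_log_concave (d k : ℕ) (hd : 1 ≤ d) (hk1 : 2 ≤ k) (hkd : k ≤ d - 1) :
    eulerian d (k - 1) * eulerian d (k + 1) ≤ eulerian d k ^ 2 := by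
  obtain ⟨i, rfl⟩ : ∃ i, k = i + 2 := ⟨k - 2, by omega⟩
  have key := ELC.S_LC d i
  rw [eulerian_eq_S, eulerian_eq_S, eulerian_eq_S]
  have a1 : i + 2 - 1 - 1 = i := by omega
  have a2 : i + 2 + 1 - 1 = i + 2 := by omega
  have a3 : i + 2 - 1 = i + 1 := by omega
  rw [a1, a2, a3]
  exact key
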